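/- Let ι_1 : Fin n_1 → Fin m and ι_2 : Fin n_2 → Fin m be injective maps with disjoint ranges, and write Φ_k = Φ_{ι_k}. Let η : sl_m(ℂ) → M_m(ℂ) be a ℂ-linear map (a noncommutative connection 1-form on M_m(ℂ)), and for k = 1, 2 let ω_k : sl_{n_k}(ℂ) → M_{n_k}(ℂ) be ℂ-linear maps with η(Φ_k(E)) = Φ_k(ω_k(E)) for all E ∈ sl_{n_k}(ℂ). Define the curvature of η by Θ(X,Y) := [X, η(Y)] − [Y, η(X)] − η([X,Y]) − [η(X), η(Y)] for X, Y ∈ sl_m(ℂ), and analogously define Θ^{ω_k}(E,E') := [E, ω_k(E')] − [E', ω_k(E)] − ω_k([E,E']) − [ω_k(E), ω_k(E')] on sl_{n_k}(ℂ). Then: (i) Θ(Φ_1(E), Φ_2(E')) = 0 for all E ∈ sl_{n_1}(ℂ) and E' ∈ sl_{n_2}(ℂ); (ii) Θ(Φ_1(E), Φ_1(E')) = Φ_1(Θ^{ω_1}(E,E')) for all E, E' ∈ sl_{n_1}(ℂ). -/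

import Mathlib

/-- The corner embedding `Φ_ι : M_n(ℂ) → M_m(ℂ)` associated to an injective map
`ι : Fin n → Fin m`: the `(ι k, ι l)` entry of `cornerEmb ι a` is `a k l` and all other
entries are `0`. -/
noncomputable def cornerEmb {n m : ℕ} (ι : Fin n → Fin m) (a : Matrix (Fin n) (Fin n) ℂ) :
    Matrix (Fin m) (Fin m) ℂ :=
  ∑ k : Fin n, ∑ l : Fin n, a k l • Matrix.single (ι k) (ι l) 1


lemma cornerEmb_eq {n m : ℕ} (ι : Fin n → Fin m) (a : Matrix (Fin n) (Fin n) ℂ) :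
    cornerEmb ι a = ∑ k : Fin n, ∑ l : Fin n, Matrix.single (ι k) (ι l) (a k l) := by
  simp [cornerEmb, Matrix.smul_single]

lemma cornerEmb_sub {n m : ℕ} (ι : Fin n → Fin m) (a b : Matrix (Fin n) (Fin n) ℂ) :
    cornerEmb ι (a - b) = cornerEmb ι a - cornerEmb ι b := by
  simp [cornerEmb, sub_smul, Finset.sum_sub_distrib]

lemma cornerEmb_mul_expand {n n' m : ℕ} (ι : Fin n → Fin m) (ι' : Fin n' → Fin m)
    (a : Matrix (Fin n) (Fin n) ℂ) (b : Matrix (Fin n') (Fin n') ℂ) :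
    cornerEmb ι a * cornerEmb ι' b =
      ∑ k : Fin n, ∑ l : Fin n, ∑ p : Fin n', ∑ q : Fin n',
        Matrix.single (ι k) (ι l) (a k l) *
          Matrix.single (ι' p) (ι' q) (b p q) := by
  rw [cornerEmb_eq, cornerEmb_eq, Finset.sum_mul]
  refine Finset.sum_congr rfl fun k _ => ?_
  rw [Finset.sum_mul]
  refine Finset.sum_congr rfl fun l _ => ?_
  rw [Finset.mul_sum]
  refine Finset.sum_congr rfl fun p _ => ?_
  rw [Finset.mul_sum]

lemma cornerEmb_mul_disjoint {n n' m : ℕ} {ι : Fin n → Fin m} {ι' : Fin n' → Fin m}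
    (hdisj : Disjoint (Set.range ι) (Set.range ι'))
    (a : Matrix (Fin n) (Fin n) ℂ) (b : Matrix (Fin n') (Fin n') ℂ) :
    cornerEmb ι a * cornerEmb ι' b = 0 := by
  rw [cornerEmb_mul_expand]
  apply Finset.sum_eq_zero; intro k _
  apply Finset.sum_eq_zero; intro l _
  apply Finset.sum_eq_zero; intro p _
  apply Finset.sum_eq_zero; intro q _
  have hne : ι l ≠ ι' p := fun h =>
    (Set.disjoint_left.mp hdisj ⟨l, rfl⟩) ⟨p, h.symm⟩
  rw [Matrix.single_mul_single_of_ne (h := hne)]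

lemma cornerEmb_mul {n m : ℕ} {ι : Fin n → Fin m} (hι : Function.Injective ι)
    (a b : Matrix (Fin n) (Fin n) ℂ) :
    cornerEmb ι a * cornerEmb ι b = cornerEmb ι (a * b) := by
  rw [cornerEmb_mul_expand, cornerEmb_eq]
  have key : ∀ k l p q : Fin n,
      Matrix.single (ι k) (ι l) (a k l) * Matrix.single (ι p) (ι q) (b p q) =
      if l = p then Matrix.single (ι k) (ι q) (a k l * b p q) else 0 := by
    intro k l p q
    by_cases h : l = p
    · subst h; rw [Matrix.single_mul_single_same, if_pos rfl]
    · rw [Matrix.single_mul_single_of_ne (h := fun hh => h (hι hh)), if_neg h]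
  have hsum : ∀ (i j : Fin m) (f : Fin n → ℂ),
      ∑ l : Fin n, Matrix.single i j (f l) = Matrix.single i j (∑ l, f l) := by
    intro i j f
    ext u v
    simp only [Matrix.sum_apply, Matrix.single, Matrix.of_apply]
    split <;> simp
  simp only [key]
  refine Finset.sum_congr rfl fun k _ => ?_
  refine Eq.trans (Finset.sum_congr rfl fun l _ => Finset.sum_comm) ?_
  simp only [Finset.sum_ite_eq, Finset.mem_univ, if_true]
  rw [Finset.sum_comm]
  refine Finset.sum_congr rfl fun q _ => ?_
  rw [hsum, Matrix.mul_apply]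

/-- The curvature 2-form of a connection 1-form `η`:
`Θ(X,Y) = [X,η(Y)] − [Y,η(X)] − η([X,Y]) − [η(X),η(Y)]`. -/
noncomputable def curvTwoForm {N : ℕ}
    (η : Matrix (Fin N) (Fin N) ℂ →ₗ[ℂ] Matrix (Fin N) (Fin N) ℂ)
    (X Y : Matrix (Fin N) (Fin N) ℂ) : Matrix (Fin N) (Fin N) ℂ :=
  (X * η Y - η Y * X) - (Y * η X - η X * Y) - η (X * Y - Y * X) -
    (η X * η Y - η Y * η X)

/-- For a connection 1-form `η` on `M_m(ℂ)` that is `φ`-compatible with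
connection 1-forms `ω₁, ω₂` through corner embeddings with disjoint ranges, the curvature
of `η` vanishes on derivations inherited from different blocks, and on derivations
inherited from the same block it is the embedding of the curvature of `ω₁`. -/
theorem curvature_inherited_components {n₁ n₂ m : ℕ}
    (ι₁ : Fin n₁ → Fin m) (ι₂ : Fin n₂ → Fin m)
    (h₁ : Function.Injective ι₁) (h₂ : Function.Injective ι₂)
    (hdisj : Disjoint (Set.range ι₁) (Set.range ι₂))
    (η : Matrix (Fin m) (Fin m) ℂ →ₗ[ℂ] Matrix (Fin m) (Fin m) ℂ)
    (ω₁ : Matrix (Fin n₁) (Fin n₁) ℂ →ₗ[ℂ] Matrix (Fin n₁) (Fin n₁) ℂ)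
    (ω₂ : Matrix (Fin n₂) (Fin n₂) ℂ →ₗ[ℂ] Matrix (Fin n₂) (Fin n₂) ℂ)
    (hc₁ : ∀ E : Matrix (Fin n₁) (Fin n₁) ℂ, E.trace = 0 →
      η (cornerEmb ι₁ E) = cornerEmb ι₁ (ω₁ E))
    (hc₂ : ∀ E : Matrix (Fin n₂) (Fin n₂) ℂ, E.trace = 0 →
      η (cornerEmb ι₂ E) = cornerEmb ι₂ (ω₂ E)) :
    (∀ (E : Matrix (Fin n₁) (Fin n₁) ℂ) (E' : Matrix (Fin n₂) (Fin n₂) ℂ),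
      E.trace = 0 → E'.trace = 0 →
      curvTwoForm η (cornerEmb ι₁ E) (cornerEmb ι₂ E') = 0) ∧
    (∀ E E' : Matrix (Fin n₁) (Fin n₁) ℂ, E.trace = 0 → E'.trace = 0 →
      curvTwoForm η (cornerEmb ι₁ E) (cornerEmb ι₁ E') =
        cornerEmb ι₁
          ((E * ω₁ E' - ω₁ E' * E) - (E' * ω₁ E - ω₁ E * E') -
            ω₁ (E * E' - E' * E) - (ω₁ E * ω₁ E' - ω₁ E' * ω₁ E))) := by
  constructor
  · intro E E' hE hE'
    unfold curvTwoForm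
    rw [hc₁ E hE, hc₂ E' hE']
    simp only [cornerEmb_mul_disjoint hdisj, cornerEmb_mul_disjoint hdisj.symm,
      sub_self, sub_zero, map_zero]
  · intro E E' hE hE'
    have hcomm : (E * E' - E' * E).trace = 0 := by
      rw [Matrix.trace_sub, Matrix.trace_mul_comm, sub_self]
    unfold curvTwoForm
    rw [hc₁ E hE, hc₁ E' hE']
    simp only [cornerEmb_mul h₁, ← cornerEmb_sub]
    rw [hc₁ _ hcomm]
    simp only [← cornerEmb_sub]
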